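/- Let a, b, c, d, x, y, z, u be eight distinct points appearing in this clockwise order on a circle, and let R ⊆ T² contain the directed chords (a,x), (b,y), (c,z), (d,u). Let R' = (R \ {(b,y),(c,z)}) ∪ {(b,z),(c,y)}. Then every chord (s,t) with s,t ∈ T crosses at most as many chords in {(b,z),(c,y)} as in {(b,y),(c,z)}; consequently the total number of crossing pairs of chords in R' is strictly smaller than in R. -/

import Mathlib

attribute [local instance] Classical.propDecidable

def cw4 (n : ℕ) (a b c d : Fin n) : Prop :=
  0 < (b - a).val ∧ (b - a).val < (c - a).val ∧ (c - a).val < (d - a).val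

def cyc4 (n : ℕ) (a b c d : Fin n) : Prop := cw4 n a b c d ∨ cw4 n a d c b

/-- Two chords cross: their endpoints are all distinct and alternate around the circle. -/
def crosses (n : ℕ) (p q : Fin n × Fin n) : Prop := cyc4 n p.1 q.1 p.2 q.2

/-- Eight pairwise distinct points in this clockwise cyclic order. -/
def cw8 (n : ℕ) (a b c d x y z u : Fin n) : Prop :=
  0 < (b - a).val ∧ (b - a).val < (c - a).val ∧ (c - a).val < (d - a).val ∧
  (d - a).val < (x - a).val ∧ (x - a).val < (y - a).val ∧ (y - a).val < (z - a).val ∧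
  (z - a).val < (u - a).val

/-- The number of (ordered) crossing pairs of chords in `R`. -/
noncomputable def numCrossings (n : ℕ) (R : Finset (Fin n × Fin n)) : ℕ :=
  ((R ×ˢ R).filter (fun p => crosses n p.1 p.2)).card

lemma sub_val_char {n : ℕ} (p q : Fin n) :
    (q.val ≤ p.val ∧ (p - q).val + q.val = p.val) ∨
    (p.val < q.val ∧ (p - q).val + q.val = p.val + n) := by
  have hp := p.is_lt; have hq := q.is_lt
  rw [Fin.sub_def]
  simp only [Fin.val_mk]
  rcases le_or_gt q.val p.val with h | h
  · left
    refine ⟨h, ?_⟩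
    rw [show n - q.val + p.val = (p.val - q.val) + n by omega, Nat.add_mod_right,
      Nat.mod_eq_of_lt (by omega)]
    omega
  · right
    refine ⟨h, ?_⟩
    rw [Nat.mod_eq_of_lt (by omega)]
    omega

lemma natkernel (B C Y Z T : ℕ)
    (hrot : (B < C ∧ C < Y ∧ Y < Z) ∨ (C < Y ∧ Y < Z ∧ Z < B) ∨
      (Y < Z ∧ Z < B ∧ B < C) ∨ (Z < B ∧ B < C ∧ C < Y)) :
    (((0 < B ∧ B < T ∧ T < Z) ∨ (0 < Z ∧ Z < T ∧ T < B)) →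
      ((0 < B ∧ B < T ∧ T < Y) ∨ (0 < Y ∧ Y < T ∧ T < B)) ∨
      ((0 < C ∧ C < T ∧ T < Z) ∨ (0 < Z ∧ Z < T ∧ T < C))) ∧
    (((0 < C ∧ C < T ∧ T < Y) ∨ (0 < Y ∧ Y < T ∧ T < C)) →
      ((0 < B ∧ B < T ∧ T < Y) ∨ (0 < Y ∧ Y < T ∧ T < B)) ∨
      ((0 < C ∧ C < T ∧ T < Z) ∨ (0 < Z ∧ Z < T ∧ T < C))) ∧
    (((0 < B ∧ B < T ∧ T < Z) ∨ (0 < Z ∧ Z < T ∧ T < B)) →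
     ((0 < C ∧ C < T ∧ T < Y) ∨ (0 < Y ∧ Y < T ∧ T < C)) →
      (((0 < B ∧ B < T ∧ T < Y) ∨ (0 < Y ∧ Y < T ∧ T < B)) ∧
      ((0 < C ∧ C < T ∧ T < Z) ∨ (0 < Z ∧ Z < T ∧ T < C)))) := by
  omega

set_option maxHeartbeats 1000000 in
lemma rot {n : ℕ} {p q r w : Fin n} (h : cw4 n p q r w) : cw4 n q r w p := by
  obtain ⟨h1, h2, h3⟩ := h
  have e1 := sub_val_char q p
  have e2 := sub_val_char r p
  have e3 := sub_val_char w p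
  have f1 := sub_val_char r q
  have f2 := sub_val_char w q
  have f3 := sub_val_char p q
  have g1 := p.is_lt; have g2 := q.is_lt; have g3 := r.is_lt; have g4 := w.is_lt
  exact ⟨by omega, by omega, by omega⟩

lemma crosses_comm {n : ℕ} {p q : Fin n × Fin n} (h : crosses n p q) : crosses n q p := by
  rcases h with h | h
  · exact Or.inr (rot h)
  · exact Or.inl (rot (rot (rot h)))

lemma not_crosses_self {n : ℕ} (p : Fin n × Fin n) : ¬ crosses n p p := by
  rintro (⟨h1, h2, h3⟩ | ⟨h1, h2, h3⟩)
  · have := sub_val_char p.1 p.1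
    omega
  · omega

set_option maxHeartbeats 2000000 in
lemma transfer {n : ℕ} (a b c y z s : Fin n)
    (h1 : 0 < (b-a).val) (h2 : (b-a).val < (c-a).val) (h3 : (c-a).val < (y-a).val)
    (h4 : (y-a).val < (z-a).val) :
    ((b-s).val < (c-s).val ∧ (c-s).val < (y-s).val ∧ (y-s).val < (z-s).val) ∨
    ((c-s).val < (y-s).val ∧ (y-s).val < (z-s).val ∧ (z-s).val < (b-s).val) ∨
    ((y-s).val < (z-s).val ∧ (z-s).val < (b-s).val ∧ (b-s).val < (c-s).val) ∨
    ((z-s).val < (b-s).val ∧ (b-s).val < (c-s).val ∧ (c-s).val < (y-s).val) := by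
  have e1 := sub_val_char b a
  have e2 := sub_val_char c a
  have e3 := sub_val_char y a
  have e4 := sub_val_char z a
  have f1 := sub_val_char b s
  have f2 := sub_val_char c s
  have f3 := sub_val_char y s
  have f4 := sub_val_char z s
  have g1 := a.is_lt; have g2 := b.is_lt; have g3 := c.is_lt; have g4 := y.is_lt
  have g5 := z.is_lt; have g6 := s.is_lt
  omega

lemma kernel {n : ℕ} (a b c y z s t : Fin n)
    (h1 : 0 < (b-a).val) (h2 : (b-a).val < (c-a).val) (h3 : (c-a).val < (y-a).val)
    (h4 : (y-a).val < (z-a).val) :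
    (crosses n (s,t) (b,z) → crosses n (s,t) (b,y) ∨ crosses n (s,t) (c,z)) ∧
    (crosses n (s,t) (c,y) → crosses n (s,t) (b,y) ∨ crosses n (s,t) (c,z)) ∧
    (crosses n (s,t) (b,z) → crosses n (s,t) (c,y) →
      crosses n (s,t) (b,y) ∧ crosses n (s,t) (c,z)) := by
  have hrot := transfer a b c y z s h1 h2 h3 h4
  exact natkernel (b-s).val (c-s).val (y-s).val (z-s).val (t-s).val hrot

lemma card_filter_pair {α : Type*} [DecidableEq α] (P : α → Prop) [DecidablePred P]
    (u v : α) (h : u ≠ v) :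
    (({u, v} : Finset α).filter P).card = (if P u then 1 else 0) + (if P v then 1 else 0) := by
  rw [Finset.card_filter, Finset.sum_pair h]

/-- Uncrossing `(b,y),(c,z)` into `(b,z),(c,y)`: every chord crosses at most as many
chords of the new pair as of the old pair, and the total number of crossings
strictly decreases. -/
theorem uncross_decreases_crossings (n : ℕ) (R : Finset (Fin n × Fin n))
    (a b c d x y z u : Fin n) (horder : cw8 n a b c d x y z u)
    (hax : (a, x) ∈ R) (hby : (b, y) ∈ R) (hcz : (c, z) ∈ R) (hdu : (d, u) ∈ R) :
    (∀ p : Fin n × Fin n,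
      (({(b, z), (c, y)} : Finset (Fin n × Fin n)).filter (fun q => crosses n p q)).card ≤
      (({(b, y), (c, z)} : Finset (Fin n × Fin n)).filter (fun q => crosses n p q)).card) ∧
    numCrossings n ((R \ {(b, y), (c, z)}) ∪ {(b, z), (c, y)}) < numCrossings n R := by
  classical
  obtain ⟨h1, h2, h3d, h3x, h3y, h4, h5⟩ := horder
  have h3 : (c - a).val < (y - a).val := lt_trans h3d (lt_trans h3x h3y)
  -- basic distinctness
  have hbc : b ≠ c := by rintro rfl; exact lt_irrefl _ h2
  have hyz : y ≠ z := by rintro rfl; exact lt_irrefl _ h4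
  have hne1 : ((b, z) : Fin n × Fin n) ≠ (c, y) := by simp [hbc]
  have hne2 : ((b, y) : Fin n × Fin n) ≠ (c, z) := by simp [hbc]
  -- indicator function
  set F : (Fin n × Fin n) → (Fin n × Fin n) → ℕ :=
    fun p q => if crosses n p q then 1 else 0 with hF
  have Fcomm : ∀ p q, F p q = F q p := by
    intro p q
    simp only [hF]
    by_cases h : crosses n p q
    · rw [if_pos h, if_pos (crosses_comm h)]
    · rw [if_neg h, if_neg (fun h' => h (crosses_comm h'))]
  -- row inequality
  have rowle : ∀ p : Fin n × Fin n, F p (b, z) + F p (c, y) ≤ F p (b, y) + F p (c, z) := by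
    rintro ⟨s, t⟩
    have hk := kernel a b c y z s t h1 h2 h3 h4
    simp only [hF]
    by_cases H1 : crosses n (s, t) (b, z) <;> by_cases H2 : crosses n (s, t) (c, y) <;>
      by_cases H3 : crosses n (s, t) (b, y) <;> by_cases H4 : crosses n (s, t) (c, z) <;>
      simp only [H1, H2, H3, H4, if_true, if_false] <;>
      first
        | omega
        | (exfalso; tauto)
  have part1 : ∀ p : Fin n × Fin n,
      (({(b, z), (c, y)} : Finset (Fin n × Fin n)).filter (fun q => crosses n p q)).card ≤
      (({(b, y), (c, z)} : Finset (Fin n × Fin n)).filter (fun q => crosses n p q)).card := by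
    intro p
    rw [card_filter_pair _ _ _ hne1, card_filter_pair _ _ _ hne2]
    exact rowle p
  refine ⟨part1, ?_⟩
  -- crossing facts about the old/new pairs
  have hrotb := transfer a b c y z b h1 h2 h3 h4
  have hrotc := transfer a b c y z c h1 h2 h3 h4
  have hbb : (b - b).val = 0 := by have := sub_val_char b b; omega
  have hcc : (c - c).val = 0 := by have := sub_val_char c c; omega
  have hOO1 : crosses n (b, y) (c, z) := by
    show cyc4 n b c y z
    unfold cyc4 cw4
    omega
  have hOO2 : crosses n (c, z) (b, y) := crosses_comm hOO1
  have hNN1 : ¬ crosses n (b, z) (c, y) := by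
    show ¬ cyc4 n b c z y
    unfold cyc4 cw4
    omega
  have hNN2 : ¬ crosses n (c, y) (b, z) := fun h => hNN1 (crosses_comm h)
  -- sum formulation of numCrossings
  have numEq : ∀ A : Finset (Fin n × Fin n),
      numCrossings n A = ∑ p ∈ A, ∑ q ∈ A, F p q := by
    intro A
    rw [numCrossings, Finset.card_filter, Finset.sum_product]
  -- set decomposition
  set O : Finset (Fin n × Fin n) := {(b, y), (c, z)} with hOdef
  set N : Finset (Fin n × Fin n) := {(b, z), (c, y)} with hNdef
  set S : Finset (Fin n × Fin n) := R \ O with hSdef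
  have hOsub : O ⊆ R := by
    rw [hOdef]
    intro q hq
    simp only [Finset.mem_insert, Finset.mem_singleton] at hq
    rcases hq with rfl | rfl
    · exact hby
    · exact hcz
  have hdisj : Disjoint S O := Finset.sdiff_disjoint
  have hRsplit : S ∪ O = R := Finset.sdiff_union_of_subset hOsub
  -- sums over O and N rows/cols
  have sumO_row : ∀ p, ∑ q ∈ O, F p q = F p (b, y) + F p (c, z) := fun p =>
    Finset.sum_pair hne2
  have sumN_row : ∀ p, ∑ q ∈ N, F p q = F p (b, z) + F p (c, y) := fun p =>
    Finset.sum_pair hne1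
  -- numCrossings R
  have hR : numCrossings n R =
      (∑ p ∈ S, ∑ q ∈ S, F p q) + (∑ p ∈ S, ∑ q ∈ O, F p q)
      + ((∑ p ∈ O, ∑ q ∈ S, F p q) + (∑ p ∈ O, ∑ q ∈ O, F p q)) := by
    rw [numEq, ← hRsplit, Finset.sum_union hdisj]
    congr 1
    · rw [← Finset.sum_add_distrib]
      exact Finset.sum_congr rfl fun p _ => Finset.sum_union hdisj
    · rw [← Finset.sum_add_distrib]
      exact Finset.sum_congr rfl fun p _ => Finset.sum_union hdisj
  have hOO : ∑ p ∈ O, ∑ q ∈ O, F p q = 2 := by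
    rw [hOdef, Finset.sum_pair hne2, Finset.sum_pair hne2, Finset.sum_pair hne2]
    simp only [hF, if_pos hOO1, if_pos hOO2,
      if_neg (not_crosses_self ((b, y) : Fin n × Fin n)),
      if_neg (not_crosses_self ((c, z) : Fin n × Fin n))]
    norm_num
  have hNN : ∀ p ∈ N, ∀ q ∈ N, F p q = 0 := by
    intro p hp q hq
    rw [hNdef] at hp hq
    simp only [Finset.mem_insert, Finset.mem_singleton] at hp hq
    simp only [hF]
    rcases hp with rfl | rfl <;> rcases hq with rfl | rfl
    · exact if_neg (not_crosses_self _)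
    · exact if_neg hNN1
    · exact if_neg hNN2
    · exact if_neg (not_crosses_self _)
  -- bound numCrossings R'
  have hsub : (R \ {(b, y), (c, z)}) ∪ {(b, z), (c, y)} = S ∪ N := rfl
  have mono_union : ∀ (A B : Finset (Fin n × Fin n)) (f : (Fin n × Fin n) → ℕ),
      ∑ p ∈ A ∪ B, f p ≤ ∑ p ∈ A, f p + ∑ p ∈ B, f p := by
    intro A B f
    rw [← Finset.union_sdiff_self_eq_union, Finset.sum_union Finset.disjoint_sdiff]
    exact Nat.add_le_add_left (Finset.sum_le_sum_of_subset (Finset.sdiff_subset)) _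
  have hR' : numCrossings n ((R \ {(b, y), (c, z)}) ∪ {(b, z), (c, y)}) ≤
      (∑ p ∈ S, ∑ q ∈ S, F p q) + (∑ p ∈ S, ∑ q ∈ N, F p q)
      + ((∑ p ∈ N, ∑ q ∈ S, F p q) + (∑ p ∈ N, ∑ q ∈ N, F p q)) := by
    rw [numEq, hsub]
    calc ∑ p ∈ S ∪ N, ∑ q ∈ S ∪ N, F p q
        ≤ (∑ p ∈ S, ∑ q ∈ S ∪ N, F p q) + ∑ p ∈ N, ∑ q ∈ S ∪ N, F p q :=
          mono_union S N _
      _ ≤ ((∑ p ∈ S, (∑ q ∈ S, F p q + ∑ q ∈ N, F p q))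
            + ∑ p ∈ N, (∑ q ∈ S, F p q + ∑ q ∈ N, F p q)) := by
          gcongr with p hp p hp <;> exact mono_union S N _
      _ = _ := by rw [Finset.sum_add_distrib, Finset.sum_add_distrib]
  have hSN_le : ∑ p ∈ S, ∑ q ∈ N, F p q ≤ ∑ p ∈ S, ∑ q ∈ O, F p q := by
    apply Finset.sum_le_sum
    intro p _
    rw [sumO_row, sumN_row]
    exact rowle p
  have hNS_le : ∑ p ∈ N, ∑ q ∈ S, F p q ≤ ∑ p ∈ O, ∑ q ∈ S, F p q := by
    have t1 : ∑ p ∈ N, ∑ q ∈ S, F p q = ∑ q ∈ S, ∑ p ∈ N, F p q := Finset.sum_comm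
    have t2 : ∑ p ∈ O, ∑ q ∈ S, F p q = ∑ q ∈ S, ∑ p ∈ O, F p q := Finset.sum_comm
    rw [t1, t2]
    apply Finset.sum_le_sum
    intro q _
    calc ∑ p ∈ N, F p q = ∑ p ∈ N, F q p := Finset.sum_congr rfl fun p _ => Fcomm p q
      _ = F q (b, z) + F q (c, y) := sumN_row q
      _ ≤ F q (b, y) + F q (c, z) := rowle q
      _ = ∑ p ∈ O, F q p := (sumO_row q).symm
      _ = ∑ p ∈ O, F p q := Finset.sum_congr rfl fun p _ => (Fcomm p q).symm
  have hNNz : ∑ p ∈ N, ∑ q ∈ N, F p q = 0 := by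
    apply Finset.sum_eq_zero
    intro p hp
    exact Finset.sum_eq_zero fun q hq => hNN p hp q hq
  rw [hsub] at hR'
  omega
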